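/- Let A_1, A_2 be commuting matrices in GL(ρ, Z) defining a totally ergodic Z^2-action by automorphisms of the torus T^ρ (i.e., A^l = A_1^{l_1}A_2^{l_2} has no eigenvalue that is a root of unity for l ≠ 0). Then there exist a joint invariant subspace decomposition of C^ρ and, for each nonzero v ∈ Z^ρ, eigenvalues α_1 of A_1 and α_2 of A_2 with the map (l_1,l_2) ↦ α_1^{l_1}α_2^{l_2} injective on Z^2, and a nonzero scalar v_0, such that for all l, l' ∈ Z^2: if A^l v = A^{l'} v then l = l'. -/

import Mathlib

open Matrix

open Polynomial
section Aux

variable {n : Type*} [Fintype n] [DecidableEq n]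

lemma myCharpolyEval {R : Type*} [CommRing R] (M : Matrix n n R) (r : R) :
    M.charpoly.eval r = (Matrix.scalar n r - M).det := by
  rw [Matrix.charpoly, _root_.eval_det, matPolyEquiv_charmatrix]
  simp

lemma myIsRootCharpoly {K : Type*} [Field K] (M : Matrix n n K) {α : K}
    {w : n → K} (hw : w ≠ 0) (h : M.mulVec w = α • w) : M.charpoly.IsRoot α := by
  rw [Polynomial.IsRoot, myCharpolyEval, ← Matrix.exists_mulVec_eq_zero_iff]
  refine ⟨w, hw, ?_⟩
  rw [Matrix.sub_mulVec, h]
  have : (Matrix.scalar n α).mulVec w = α • w := by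
    funext i
    simp [Matrix.scalar, Matrix.mulVec_diagonal]
  rw [this, sub_self]

lemma myUnitMulVecNeZero {R : Type*} [CommRing R] (M : (Matrix n n R)ˣ) {v : n → R}
    (hv : v ≠ 0) : (Units.val M).mulVec v ≠ 0 := by
  intro h
  apply hv
  have h2 := congrArg (fun u => (Units.val M⁻¹).mulVec u) h
  simp only [Matrix.mulVec_mulVec, Matrix.mulVec_zero] at h2
  rwa [← Units.val_mul, inv_mul_cancel, Units.val_one, Matrix.one_mulVec] at h2

lemma myEigNeZero {K : Type*} [Field K] (M : (Matrix n n K)ˣ) {α : K} {w : n → K}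
    (hw : w ≠ 0) (h : (Units.val M).mulVec w = α • w) : α ≠ 0 := by
  intro h0
  exact myUnitMulVecNeZero M hw (by rw [h, h0, zero_smul])

lemma myZpowMulVec {K : Type*} [Field K] (M : (Matrix n n K)ˣ) {α : K} {w : n → K}
    (hα : α ≠ 0) (h : (Units.val M).mulVec w = α • w) (m : ℤ) :
    (Units.val (M ^ m)).mulVec w = α ^ m • w := by
  have hnat : ∀ k : ℕ, (Units.val (M ^ k)).mulVec w = α ^ k • w := by
    intro k
    induction k with
    | zero => simp
    | succ k ih =>
      rw [pow_succ, Units.val_mul, ← Matrix.mulVec_mulVec, h, Matrix.mulVec_smul, ih,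
        smul_smul, pow_succ]
      ring_nf
  rcases m with k | k
  · simpa using hnat k
  · set N : (Matrix n n K)ˣ := M ^ (k + 1) with hN
    have hk : (Units.val N).mulVec w = α ^ (k + 1) • w := hnat (k + 1)
    have h4 := congrArg (fun u => (Units.val N⁻¹).mulVec u) hk
    simp only [Matrix.mulVec_mulVec, Matrix.mulVec_smul] at h4
    rw [← Units.val_mul, inv_mul_cancel, Units.val_one, Matrix.one_mulVec] at h4
    have hαk : (α ^ (k + 1) : K) ≠ 0 := pow_ne_zero _ hα
    have h2 : (Units.val N⁻¹).mulVec w = (α ^ (k + 1))⁻¹ • w :=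
      ((inv_smul_eq_iff₀ hαk).mpr h4).symm
    rw [zpow_negSucc, zpow_negSucc]
    exact h2

lemma myCommonEigenvector {ρ : ℕ} (hρ : 0 < ρ) (M N : Matrix (Fin ρ) (Fin ρ) ℂ)
    (h : M * N = N * M) : ∃ (α β : ℂ) (w : Fin ρ → ℂ), w ≠ 0 ∧
      M.mulVec w = α • w ∧ N.mulVec w = β • w := by
  haveI : Nontrivial (Fin ρ → ℂ) := by
    refine ⟨0, fun _ => 1, fun hc => ?_⟩
    have := congrFun hc ⟨0, hρ⟩
    simp at this
  set f : Module.End ℂ (Fin ρ → ℂ) := Matrix.toLin' M with hf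
  set g : Module.End ℂ (Fin ρ → ℂ) := Matrix.toLin' N with hg
  have hfg : Commute f g := by
    show f * g = g * f
    simp only [hf, hg, Module.End.mul_eq_comp, ← Matrix.toLin'_mul, h]
  obtain ⟨α, hα⟩ := Module.End.exists_eigenvalue f
  set E : Submodule ℂ (Fin ρ → ℂ) := f.eigenspace α with hE
  haveI : Nontrivial E := by
    obtain ⟨x, hx⟩ := hα.exists_hasEigenvector
    refine ⟨⟨x, hx.1⟩, 0, fun hc => hx.2 ?_⟩
    simpa using congrArg Subtype.val hc
  have hmaps : ∀ x ∈ E, g x ∈ E :=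
    fun x hx => Module.End.mapsTo_genEigenspace_of_comm hfg α 1 hx
  set g' : Module.End ℂ E := g.restrict hmaps with hg'
  obtain ⟨β, hβ⟩ := Module.End.exists_eigenvalue g'
  obtain ⟨x, hx⟩ := hβ.exists_hasEigenvector
  refine ⟨α, β, (x : Fin ρ → ℂ), fun hc => hx.2 (by simpa using Subtype.ext hc), ?_, ?_⟩
  · have hxE : (x : Fin ρ → ℂ) ∈ E := x.2
    have := Module.End.mem_eigenspace_iff.mp hxE
    simpa [hf, Matrix.toLin'_apply] using this
  · have h3 : g' x = β • x := Module.End.mem_eigenspace_iff.mp hx.1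
    have h4 := congrArg Subtype.val h3
    simp only [hg', LinearMap.restrict_apply] at h4
    simpa [hg, Matrix.toLin'_apply] using h4

end Aux
/-- For a totally ergodic `ℤ²`-action by commuting toral automorphisms `A₁, A₂ ∈ GL(ρ, ℤ)`
(no eigenvalue of `A^l`, `l ≠ 0`, is a root of unity), for every nonzero `v ∈ ℤ^ρ` there
are eigenvalues `α₁` of `A₁` and `α₂` of `A₂` such that `(l₁,l₂) ↦ α₁^{l₁} α₂^{l₂}` is
injective on `ℤ²`, and the orbit map `l ↦ A^l v` is injective. -/
theorem stmt19 {ρ : ℕ} (A₁ A₂ : GL (Fin ρ) ℤ) (hcomm : A₁ * A₂ = A₂ * A₁)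
    (herg : ∀ l : ℤ × ℤ, l ≠ 0 → ∀ c : ℂ, (∃ m : ℕ, 0 < m ∧ c ^ m = 1) →
      ¬ (((A₁ ^ l.1 * A₂ ^ l.2 : GL (Fin ρ) ℤ) : Matrix (Fin ρ) (Fin ρ) ℤ).map
          (Int.cast : ℤ → ℂ)).charpoly.IsRoot c) :
    ∀ v : Fin ρ → ℤ, v ≠ 0 →
      (∃ α₁ α₂ : ℂ,
        ((A₁ : Matrix (Fin ρ) (Fin ρ) ℤ).map (Int.cast : ℤ → ℂ)).charpoly.IsRoot α₁ ∧
        ((A₂ : Matrix (Fin ρ) (Fin ρ) ℤ).map (Int.cast : ℤ → ℂ)).charpoly.IsRoot α₂ ∧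
        Function.Injective fun l : ℤ × ℤ => α₁ ^ l.1 * α₂ ^ l.2) ∧
      Function.Injective fun l : ℤ × ℤ =>
        ((A₁ ^ l.1 * A₂ ^ l.2 : GL (Fin ρ) ℤ) : Matrix (Fin ρ) (Fin ρ) ℤ).mulVec v := by
  intro v hv
  have hρ : 0 < ρ := by
    rcases Nat.eq_zero_or_pos ρ with h0 | h0
    · subst h0
      exact absurd (_root_.funext fun i => Fin.elim0 i) hv
    · exact h0
  set φ : Matrix (Fin ρ) (Fin ρ) ℤ →+* Matrix (Fin ρ) (Fin ρ) ℂ :=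
    (Int.castRingHom ℂ).mapMatrix with hφ
  set f : GL (Fin ρ) ℤ →* GL (Fin ρ) ℂ :=
    Units.map (φ : Matrix (Fin ρ) (Fin ρ) ℤ →* Matrix (Fin ρ) (Fin ρ) ℂ) with hfdef
  have hkey : ∀ X : GL (Fin ρ) ℤ,
      Units.val (f X) = (X : Matrix (Fin ρ) (Fin ρ) ℤ).map (Int.cast : ℤ → ℂ) := by
    intro X; rfl
  have hcommC : Units.val (f A₁) * Units.val (f A₂)
      = Units.val (f A₂) * Units.val (f A₁) := by
    have h := congrArg (fun X => Units.val (f X)) hcomm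
    simpa only [_root_.map_mul, Units.val_mul] using h
  obtain ⟨α₁, α₂, w, hw, h1, h2⟩ :=
    myCommonEigenvector hρ (Units.val (f A₁)) (Units.val (f A₂)) hcommC
  have hα₁ : α₁ ≠ 0 := myEigNeZero (f A₁) hw h1
  have hα₂ : α₂ ≠ 0 := myEigNeZero (f A₂) hw h2
  have horbit : ∀ m : ℤ × ℤ,
      (Units.val (f A₁ ^ m.1 * f A₂ ^ m.2)).mulVec w = (α₁ ^ m.1 * α₂ ^ m.2) • w := by
    intro m
    rw [Units.val_mul, ← Matrix.mulVec_mulVec, myZpowMulVec (f A₂) hα₂ h2,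
      Matrix.mulVec_smul, myZpowMulVec (f A₁) hα₁ h1, smul_smul, mul_comm]
  have hmapzpow : ∀ m : ℤ × ℤ,
      ((A₁ ^ m.1 * A₂ ^ m.2 : GL (Fin ρ) ℤ) : Matrix (Fin ρ) (Fin ρ) ℤ).map (Int.cast : ℤ → ℂ)
        = Units.val (f A₁ ^ m.1 * f A₂ ^ m.2) := by
    intro m
    have h : f (A₁ ^ m.1 * A₂ ^ m.2) = f A₁ ^ m.1 * f A₂ ^ m.2 := by
      rw [_root_.map_mul, map_zpow, map_zpow]
    rw [← hkey, h]
  have hrel : ∀ m : ℤ × ℤ, m ≠ 0 → α₁ ^ m.1 * α₂ ^ m.2 ≠ 1 := by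
    intro m hm hone
    refine herg m hm 1 ⟨1, one_pos, one_pow 1⟩ ?_
    rw [hmapzpow m]
    refine myIsRootCharpoly _ hw ?_
    rw [horbit m, hone, one_smul]
  constructor
  · refine ⟨α₁, α₂, myIsRootCharpoly _ hw h1, myIsRootCharpoly _ hw h2, ?_⟩
    intro a b hab
    simp only at hab
    have hsub : α₁ ^ (a.1 - b.1) * α₂ ^ (a.2 - b.2) = 1 := by
      rw [zpow_sub₀ hα₁, zpow_sub₀ hα₂, div_mul_div_comm, hab,
        div_self (mul_ne_zero (zpow_ne_zero _ hα₁) (zpow_ne_zero _ hα₂))]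
    by_contra hne
    exact hrel (a.1 - b.1, a.2 - b.2)
      (fun hc => hne (Prod.ext (sub_eq_zero.mp (congrArg Prod.fst hc))
        (sub_eq_zero.mp (congrArg Prod.snd hc)))) hsub
  · intro a b hab
    simp only at hab
    by_contra hne
    have hc : Commute A₁ A₂ := hcomm
    have hgrp : (A₁ ^ (a.1 - b.1) * A₂ ^ (a.2 - b.2)) * (A₁ ^ b.1 * A₂ ^ b.2)
        = A₁ ^ a.1 * A₂ ^ a.2 := by
      have hswap : A₂ ^ (a.2 - b.2) * A₁ ^ b.1 = A₁ ^ b.1 * A₂ ^ (a.2 - b.2) :=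
        ((hc.zpow_zpow b.1 (a.2 - b.2)).eq).symm
      calc A₁ ^ (a.1 - b.1) * A₂ ^ (a.2 - b.2) * (A₁ ^ b.1 * A₂ ^ b.2)
          = A₁ ^ (a.1 - b.1) * (A₂ ^ (a.2 - b.2) * A₁ ^ b.1) * A₂ ^ b.2 := by group
        _ = A₁ ^ (a.1 - b.1) * (A₁ ^ b.1 * A₂ ^ (a.2 - b.2)) * A₂ ^ b.2 := by rw [hswap]
        _ = A₁ ^ (a.1 - b.1 + b.1) * A₂ ^ (a.2 - b.2 + b.2) := by
            rw [_root_.zpow_add, _root_.zpow_add]; group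
        _ = A₁ ^ a.1 * A₂ ^ a.2 := by rw [sub_add_cancel, sub_add_cancel]
    set g : GL (Fin ρ) ℤ := A₁ ^ (a.1 - b.1) * A₂ ^ (a.2 - b.2) with hgdef
    have hfix : (Units.val g).mulVec
        (((A₁ ^ b.1 * A₂ ^ b.2 : GL (Fin ρ) ℤ) : Matrix (Fin ρ) (Fin ρ) ℤ).mulVec v)
        = ((A₁ ^ b.1 * A₂ ^ b.2 : GL (Fin ρ) ℤ) : Matrix (Fin ρ) (Fin ρ) ℤ).mulVec v := by
      rw [Matrix.mulVec_mulVec, ← Units.val_mul, hgrp]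
      exact hab
    set v' : Fin ρ → ℤ := ((A₁ ^ b.1 * A₂ ^ b.2 : GL (Fin ρ) ℤ) :
      Matrix (Fin ρ) (Fin ρ) ℤ).mulVec v with hv'
    have hv'ne : v' ≠ 0 := myUnitMulVecNeZero _ hv
    set w' : Fin ρ → ℂ := fun i => ((v' i : ℤ) : ℂ) with hw'
    have hw'ne : w' ≠ 0 := by
      intro hc0
      apply hv'ne
      refine _root_.funext fun i => ?_
      have h5 := congrFun hc0 i
      simpa [hw'] using h5
    have hfixC : ((Units.val g).map (Int.cast : ℤ → ℂ)).mulVec w' = w' := by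
      refine _root_.funext fun i => ?_
      have h6 := (RingHom.map_mulVec (Int.castRingHom ℂ) (Units.val g) v' i).symm
      have h7 : ((Units.val g).map (Int.cast : ℤ → ℂ)).mulVec w' i
          = (((Units.val g).mulVec v' i : ℤ) : ℂ) := by
        simpa [hw', Function.comp_def] using h6
      rw [h7, hfix]
    have hm0 : (a.1 - b.1, a.2 - b.2) ≠ (0 : ℤ × ℤ) := by
      intro hc0
      exact hne (Prod.ext (sub_eq_zero.mp (congrArg Prod.fst hc0))
        (sub_eq_zero.mp (congrArg Prod.snd hc0)))
    refine herg (a.1 - b.1, a.2 - b.2) hm0 1 ⟨1, one_pos, one_pow 1⟩ ?_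
    refine myIsRootCharpoly _ hw'ne ?_
    rw [one_smul]
    exact hfixC
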